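/- Assume R₀₁ ≠ 1 and let J(E₀,β₂*) denote the Jacobian J₀ at the disease-free equilibrium with β₂ replaced by β₂* = ω(ω+ω₂+r₂)(μ+ω+α)/(B(μ+ω)+(1−σ)αB). Then the row vector v₁ = (0, 0, v₃₃, 1, 0) with v₃₃ = −mω(μ+ω+α)/(−(ω+ω₁+m+r₁)ω(μ+ω+α)+β₁B[(μ+ω)+α(1−σ)]) satisfies v₁·J(E₀,β₂*) = 0, i.e. v₁ is a left eigenvector of J(E₀,β₂*) for the eigenvalue 0. -/

import Mathlib

open Matrix

/-- If R₀₁ ≠ 1, the row vector v₁ = (0, 0, v₃₃, 1, 0) with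
v₃₃ = −mω(μ+ω+α)/(−(ω+ω₁+m+r₁)ω(μ+ω+α)+β₁B((μ+ω)+α(1−σ))) is a left
eigenvector of J(E₀,β₂*) for the eigenvalue 0. -/
theorem left_eigenvector_beta2star
    (B ω β₁ α μ δ σ ω₁ ω₂ m r₁ r₂ : ℝ)
    (hB : 0 < B) (hω : 0 < ω) (hβ₁ : 0 < β₁) (hα : 0 < α)
    (hμ : 0 < μ) (hδ : 0 < δ) (hσ : σ ∈ Set.Ioo (0 : ℝ) 1)
    (hω₁ : 0 < ω₁) (hω₂ : 0 < ω₂) (hm : 0 < m) (hr₁ : 0 < r₁) (hr₂ : 0 < r₂)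
    (S₀ V₀ R₀₁ β₂star v₃₃ : ℝ)
    (hS₀ : S₀ = B * (μ + ω) / (ω * (μ + ω + α)))
    (hV₀ : V₀ = α * B / (ω * (μ + ω + α)))
    (hR₀₁ : R₀₁ = β₁ * (B * (μ + ω) + (1 - σ) * α * B) /
      ((ω + ω₁ + m + r₁) * ω * (μ + ω + α)))
    (hR₀₁ne : R₀₁ ≠ 1)
    (hβ₂star : β₂star = ω * (ω + ω₂ + r₂) * (μ + ω + α) /
      (B * (μ + ω) + (1 - σ) * α * B))
    (hv₃₃ : v₃₃ = -(m * ω * (μ + ω + α)) /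
      (-((ω + ω₁ + m + r₁) * ω * (μ + ω + α)) + β₁ * B * ((μ + ω) + α * (1 - σ))))
    (J : Matrix (Fin 5) (Fin 5) ℝ)
    (hJ : J =
      !![-ω - α, μ, -β₁ * S₀, -β₂star * S₀, δ;
         α, -ω - μ, -(1 - σ) * β₁ * V₀, -(1 - σ) * β₂star * V₀, 0;
         0, 0, -(ω + ω₁ + m + r₁) + β₁ * (S₀ + (1 - σ) * V₀), 0, 0;
         0, 0, m, -(ω + ω₂ + r₂) + β₂star * (S₀ + (1 - σ) * V₀), 0;
         0, 0, r₁, r₂, -ω - δ]) :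
    Matrix.vecMul ![0, 0, v₃₃, 1, 0] J = 0 := by
  have hσ1 : σ < 1 := hσ.2
  have hK : (0:ℝ) < μ + ω + α := by linarith
  have hD : (0:ℝ) < B * (μ + ω) + (1 - σ) * α * B := by
    have h1 : 0 < (1 - σ) * α * B := by
      have : 0 < 1 - σ := by linarith
      positivity
    nlinarith [mul_pos hB (by linarith : (0:ℝ) < μ + ω)]
  have ha : (0:ℝ) < ω + ω₁ + m + r₁ := by linarith
  have hden : -((ω + ω₁ + m + r₁) * ω * (μ + ω + α)) + β₁ * B * ((μ + ω) + α * (1 - σ)) ≠ 0 := by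
    intro h
    apply hR₀₁ne
    rw [hR₀₁]
    have hne : (ω + ω₁ + m + r₁) * ω * (μ + ω + α) ≠ 0 :=
      ne_of_gt (mul_pos (mul_pos ha hω) hK)
    field_simp
    nlinarith [h]
  have hωK : ω * (μ + ω + α) ≠ 0 := ne_of_gt (mul_pos hω hK)
  have hDne : B * (μ + ω) + (1 - σ) * α * B ≠ 0 := ne_of_gt hD
  have hSV : S₀ + (1 - σ) * V₀ = (B * (μ + ω) + (1 - σ) * α * B) / (ω * (μ + ω + α)) := by
    rw [hS₀, hV₀]; field_simp
  have hden' : -(ω * (μ + ω + α) * (ω + ω₁ + m + r₁)) + β₁ * B * (μ + ω + α * (1 - σ)) ≠ 0 := by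
    intro h; apply hden; linarith [h]
  have hE : μ + ω + α * (1 - σ) ≠ 0 := ne_of_gt (by nlinarith [mul_pos hα (sub_pos.mpr hσ1)])
  subst hJ hv₃₃ hβ₂star
  funext j
  fin_cases j <;>
    simp [Matrix.vecMul, dotProduct, Fin.sum_univ_five, hSV,
      Matrix.vecHead, Matrix.vecTail] <;>
    field_simp <;>
    ring
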